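/- Fix a positive integer k. Then χ_L(S_n(k)) = Θ(n^{1/k}) as n → ∞; that is, there exist constants A, B > 0 and an integer N such that A·n^{1/k} ≤ χ_L(S_n(k)) ≤ B·n^{1/k} for all n ≥ N. -/

import Mathlib

open SimpleGraph

/-- Distance from a vertex to a set of vertices, `d(u,S) = min {d(u,v) : v ∈ S}`. -/
noncomputable def distToSet {V : Type*} (G : SimpleGraph V) (u : V) (S : Set V) : ℕ :=
  sInf (G.dist u '' S)

/-- `c` is a locating coloring of `G` with `k` colors: a proper coloring such that any two
distinct vertices are resolved by some color class. -/
def IsLocatingColoring {V : Type*} (G : SimpleGraph V) {k : ℕ} (c : V → Fin k) : Prop :=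
  (∀ u v : V, G.Adj u v → c u ≠ c v) ∧
  ∀ u v : V, u ≠ v →
    ∃ i : Fin k, distToSet G u (c ⁻¹' {i}) ≠ distToSet G v (c ⁻¹' {i})

/-- The locating chromatic number `χ_L(G)`: the least `k` admitting a locating `k`-coloring. -/
noncomputable def locatingChromaticNumber {V : Type*} (G : SimpleGraph V) : ℕ :=
  sInf {k : ℕ | ∃ c : V → Fin k, IsLocatingColoring G c}

/-- The vertex set of the palm `S_n(a_1, …, a_n)`: a hub `none` and, for each leg
`i : Fin n` (representing leg `i+1`), vertices `j : Fin (a (i+1))`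
(vertex `some ⟨i, j⟩` represents `a_{i+1, j+1}`). -/
def PalmVert (n : ℕ) (a : ℕ → ℕ) : Type :=
  Option ((i : Fin n) × Fin (a ((i : ℕ) + 1)))

/-- The palm `S_n(a_1, …, a_n)`: the star `K_{1,n}` whose `i`-th edge has been subdivided
`a_i - 1` times; the hub is joined to the first vertex of each leg, and consecutive
vertices along a leg are adjacent. -/
def Palm (n : ℕ) (a : ℕ → ℕ) : SimpleGraph (PalmVert n a) :=
  SimpleGraph.fromRel fun u v =>
    match u, v with
    | none, some ⟨_, j⟩ => (j : ℕ) = 0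
    | some ⟨i, j⟩, some ⟨i', j'⟩ => (i : ℕ) = (i' : ℕ) ∧ (j' : ℕ) = (j : ℕ) + 1
    | _, _ => False

section
variable {n k : ℕ}

def pdepth : PalmVert n (fun _ => k) → ℕ
  | none => 0
  | some x => (x.2 : ℕ) + 1

lemma palm_adj_hub (i : Fin n) (j : Fin k) (hj : (j : ℕ) = 0) :
    (Palm n (fun _ => k)).Adj none (some ⟨i, j⟩) := by
  simp only [Palm, fromRel_adj]
  exact ⟨(by intro h; cases h), Or.inl hj⟩

lemma palm_adj_succ (i : Fin n) (j j' : Fin k) (h : (j' : ℕ) = (j : ℕ) + 1) :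
    (Palm n (fun _ => k)).Adj (some ⟨i, j⟩) (some ⟨i, j'⟩) := by
  simp only [Palm, fromRel_adj]
  refine ⟨?_, Or.inl ⟨rfl, h⟩⟩
  intro hc
  injection hc with hc
  have : (j : ℕ) = (j' : ℕ) := by rw [show j = j' from congrArg Sigma.snd hc]
  omega


def pf (i₀ : Fin n) : PalmVert n (fun _ => k) → ℤ
  | none => 0
  | some x => if x.1 = i₀ then (x.2 : ℤ) + 1 else -((x.2 : ℤ) + 1)

lemma pf_lipschitz (i₀ : Fin n) {u v : PalmVert n (fun _ => k)}
    (h : (Palm n (fun _ => k)).Adj u v) : |pf i₀ u - pf i₀ v| ≤ 1 := by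
  rcases u with - | ⟨i, j⟩ <;> rcases v with - | ⟨i', j'⟩ <;>
    simp only [Palm, fromRel_adj, pf] at h ⊢
  · simp
  · rcases h with ⟨-, h | h⟩
    · split <;> (rw [abs_le]; omega)
    · exact absurd h not_false
  · rcases h with ⟨-, h | h⟩
    · exact absurd h not_false
    · split <;> (rw [abs_le]; omega)
  · rcases h with ⟨hne, ⟨h1, h2⟩ | ⟨h1, h2⟩⟩ <;>
    · have hii : i = i' := Fin.ext (by omega)
      subst hii
      split <;> (rw [abs_le]; omega)


lemma pf_walk_bound (i₀ : Fin n) {u v : PalmVert n (fun _ => k)}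
    (p : (Palm n (fun _ => k)).Walk u v) : |pf i₀ u - pf i₀ v| ≤ p.length := by
  induction p with
  | nil => simp
  | cons h q ih =>
    rename_i a b c
    calc |pf i₀ a - pf i₀ c| ≤ |pf i₀ a - pf i₀ b| + |pf i₀ b - pf i₀ c| :=
          abs_sub_le _ _ _
    _ ≤ 1 + q.length := add_le_add (pf_lipschitz i₀ h) ih
    _ = ((Walk.cons h q).length : ℤ) := by push_cast [Walk.length_cons]; ring

/-- walk from hub down leg `i` to depth `j`. -/
def hubWalk (i : Fin n) : (j : ℕ) → (hj : j < k) →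
    (Palm n (fun _ => k)).Walk none (some ⟨i, ⟨j, hj⟩⟩)
  | 0, hj => Walk.cons (palm_adj_hub i ⟨0, hj⟩ rfl) Walk.nil
  | j+1, hj =>
      (hubWalk i j (Nat.lt_of_succ_lt hj)).concat
        (palm_adj_succ i ⟨j, Nat.lt_of_succ_lt hj⟩ ⟨j+1, hj⟩ rfl)

lemma hubWalk_length (i : Fin n) (j : ℕ) (hj : j < k) :
    (hubWalk i j hj).length = j + 1 := by
  induction j with
  | zero => rfl
  | succ j ih => exact (Walk.length_concat _ _).trans (congrArg (· + 1) (ih _))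

/-- walk down a leg from depth `j` to depth `j + d`. -/
def legWalk (i : Fin n) (j : ℕ) (hj : j < k) : (d : ℕ) → (h : j + d < k) →
    (Palm n (fun _ => k)).Walk (some ⟨i, ⟨j, hj⟩⟩) (some ⟨i, ⟨j + d, h⟩⟩)
  | 0, h => Walk.nil
  | d+1, h =>
      (legWalk i j hj d (by omega)).concat
        (palm_adj_succ i ⟨j + d, by omega⟩ ⟨j + (d+1), h⟩ rfl)

lemma legWalk_length (i : Fin n) (j : ℕ) (hj : j < k) (d : ℕ) (h : j + d < k) :
    (legWalk i j hj d h).length = d := by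
  induction d with
  | zero => rfl
  | succ d ih => exact (Walk.length_concat _ _).trans (congrArg (· + 1) (ih _))

lemma palm_reachable (u v : PalmVert n (fun _ => k)) :
    (Palm n (fun _ => k)).Reachable u v := by
  have key : ∀ w : PalmVert n (fun _ => k), (Palm n (fun _ => k)).Reachable w none := by
    intro w
    rcases w with - | ⟨i, j⟩
    · rfl
    · exact ⟨(hubWalk i j.1 j.2).reverse⟩
  exact (key u).trans (key v).symm

lemma palm_dist_ge (i₀ : Fin n) (u v : PalmVert n (fun _ => k)) :
    |pf i₀ u - pf i₀ v| ≤ ((Palm n (fun _ => k)).dist u v : ℤ) := by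
  obtain ⟨p, hp⟩ := (palm_reachable u v).exists_walk_length_eq_dist
  exact (pf_walk_bound i₀ p).trans_eq (by rw [hp])

lemma palm_dist_hub (i : Fin n) (j : Fin k) :
    (Palm n (fun _ => k)).dist none (some ⟨i, j⟩) = j.1 + 1 := by
  refine le_antisymm ((SimpleGraph.dist_le (hubWalk i j.1 j.2)).trans_eq
      (hubWalk_length i j.1 j.2)) ?_
  have h := palm_dist_ge i none (some ⟨i, j⟩)
  simp only [pf, if_pos rfl] at h
  rw [abs_le] at h
  omega

lemma palm_dist_same (i : Fin n) (j j' : Fin k) :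
    (Palm n (fun _ => k)).dist (some ⟨i, j⟩) (some ⟨i, j'⟩) = Nat.dist j.1 j'.1 := by
  have upper : ∀ (a b : Fin k), a.1 ≤ b.1 →
      (Palm n (fun _ => k)).dist (some ⟨i, a⟩) (some ⟨i, b⟩) ≤ b.1 - a.1 := by
    intro a b hab
    have hlt : a.1 + (b.1 - a.1) < k := by omega
    have hcast : (some ⟨i, ⟨a.1 + (b.1 - a.1), hlt⟩⟩ : PalmVert n (fun _ => k))
        = some ⟨i, b⟩ :=
      congrArg (fun x : Fin k => (some ⟨i, x⟩ : PalmVert n (fun _ => k)))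
        (Fin.ext (by simp; omega))
    refine (SimpleGraph.dist_le ((legWalk i a.1 a.2 (b.1 - a.1) hlt).copy rfl hcast)).trans_eq ?_
    exact (Walk.length_copy _ _ _).trans (legWalk_length _ _ _ _ _)
  have lower := palm_dist_ge i (some ⟨i, j⟩) (some ⟨i, j'⟩)
  simp only [pf, if_pos rfl] at lower
  rw [abs_le] at lower
  rcases le_total j.1 j'.1 with hle | hle
  · have := upper j j' hle
    simp only [Nat.dist]
    omega
  · have := upper j' j hle
    replace this := SimpleGraph.dist_comm.trans_le this
    simp only [Nat.dist]
    omega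

lemma palm_dist_cross (i i' : Fin n) (h : i ≠ i') (j j' : Fin k) :
    (Palm n (fun _ => k)).dist (some ⟨i, j⟩) (some ⟨i', j'⟩) = (j.1 + 1) + (j'.1 + 1) := by
  refine le_antisymm ?_ ?_
  · refine (SimpleGraph.dist_le
        ((hubWalk i j.1 j.2).reverse.append (hubWalk i' j'.1 j'.2))).trans_eq ?_
    exact (Walk.length_append _ _).trans (congrArg₂ (· + ·) ((Walk.length_reverse _).trans (hubWalk_length _ _ _)) (hubWalk_length _ _ _))
  · have hlow := palm_dist_ge i (some ⟨i, j⟩) (some ⟨i', j'⟩)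
    simp only [pf, if_pos rfl, if_neg (Ne.symm h)] at hlow
    simp only [eq_self_iff_true, if_true] at hlow
    rw [abs_le] at hlow
    omega



lemma block_inj {m j j' r r' : ℕ} (hm : 0 < m) (hr : r < m) (hr' : r' < m)
    (h : j * m + r = j' * m + r') : j = j' ∧ r = r' := by
  have e1 : ∀ a b : ℕ, b < m → (a * m + b) % m = b := fun a b hb => by
    rw [mul_comm, Nat.mul_add_mod, Nat.mod_eq_of_lt hb]
  have e2 : ∀ a b : ℕ, b < m → (a * m + b) / m = a := fun a b hb => by
    rw [mul_comm, Nat.mul_add_div hm, Nat.div_eq_of_lt hb, add_zero]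
  constructor
  · rw [← e2 j r hr, ← e2 j' r' hr', h]
  · rw [← e1 j r hr, ← e1 j' r' hr', h]

lemma digits_inj (m : ℕ) : ∀ (K x y : ℕ), x < m ^ K → y < m ^ K →
    (∀ d < K, x / m ^ d % m = y / m ^ d % m) → x = y := by
  intro K
  induction K with
  | zero => intro x y hx hy _; simp at hx hy; omega
  | succ K ih =>
    intro x y hx hy hd
    have hm : 0 < m := by
      rcases Nat.eq_zero_or_pos m with h | h
      · subst h; simp at hx
      · exact h
    have h0 := hd 0 (Nat.succ_pos _)
    simp only [pow_zero, Nat.div_one] at h0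
    have hxy : x / m = y / m := by
      refine ih (x / m) (y / m) ?_ ?_ ?_
      · rw [Nat.div_lt_iff_lt_mul hm]; rw [pow_succ] at hx; exact hx
      · rw [Nat.div_lt_iff_lt_mul hm]; rw [pow_succ] at hy; exact hy
      · intro d hdK
        have e : ∀ z : ℕ, z / m / m ^ d = z / m ^ (d + 1) := fun z => by
          rw [Nat.div_div_eq_div_mul, ← pow_succ']
        rw [e, e]
        exact hd (d + 1) (by omega)
    rw [← Nat.div_add_mod x m, ← Nat.div_add_mod y m, hxy, h0]

lemma distToSet_singleton {V : Type*} (G : SimpleGraph V) (u w : V) :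
    distToSet G u {w} = G.dist u w := by
  simp [distToSet]

/-- the explicit locating coloring of the palm -/
def palmColor (n k m : ℕ) : PalmVert n (fun _ => k) → Fin (k * m + 1)
  | none => ⟨0, by omega⟩
  | some x => ⟨(1 + x.2.1 * m + x.1.1 / m ^ x.2.1 % m) % (k * m + 1),
      Nat.mod_lt _ (by omega)⟩

lemma palmColor_none (n k m : ℕ) : (palmColor n k m none).1 = 0 := rfl

lemma palmColor_some {n k m : ℕ} (hm : 0 < m) (x : (i : Fin n) × Fin k) :
    (palmColor n k m (some x)).1 = 1 + x.2.1 * m + x.1.1 / m ^ x.2.1 % m := by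
  have h1 : x.1.1 / m ^ x.2.1 % m < m := Nat.mod_lt _ hm
  have h2 : x.2.1 + 1 ≤ k := x.2.2
  have h3 : x.2.1 * m + m ≤ k * m := by
    rw [← Nat.succ_mul]; exact Nat.mul_le_mul_right m h2
  exact Nat.mod_eq_of_lt (by omega)

lemma palm_exists_locating {n k m : ℕ} (hk : 1 ≤ k) (hm : 1 ≤ m) (hn : n ≤ m ^ k) :
    ∃ c : PalmVert n (fun _ => k) → Fin (k * m + 1),
      IsLocatingColoring (Palm n (fun _ => k)) c := by
  have hm0 : 0 < m := hm
  set G := Palm n (fun _ => k) with hG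
  set c := palmColor n k m with hc
  have hmodlt : ∀ z : ℕ, z / m ^ 0 % m < m := fun z => Nat.mod_lt _ hm0
  -- the hub class
  have t0lt : 0 < k * m + 1 := by omega
  have hclass0 : c ⁻¹' {⟨0, t0lt⟩} = {none} := by
    ext w
    rcases w with - | x
    · exact iff_of_true rfl rfl
    · simp only [Set.mem_preimage, Set.mem_singleton_iff]
      constructor
      · intro hw
        have h0 : (1 + x.2.1 * m + x.1.1 / m ^ x.2.1 % m) = 0 := by
          rw [← palmColor_some hm0 x]; exact congrArg Fin.val hw
        omega
      · intro hw; cases (show (some x : Option _) = none from hw)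
  have hdist0 : ∀ u : PalmVert n (fun _ => k),
      distToSet G u (c ⁻¹' {⟨0, t0lt⟩}) = pdepth u := by
    intro u
    rw [hclass0]; refine (distToSet_singleton G u none).trans ?_
    rcases u with - | ⟨i, j⟩
    · exact SimpleGraph.dist_self
    · exact SimpleGraph.dist_comm.trans (palm_dist_hub i j)
  refine ⟨c, ?_, ?_⟩
  · -- proper coloring
    intro u v hadj hcc
    have hval := congrArg Fin.val hcc
    rcases u with - | ⟨i, j⟩ <;> rcases v with - | ⟨i', j'⟩
    · exact hadj.ne rfl
    · rw [palmColor_none, palmColor_some hm0] at hval; omega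
    · rw [palmColor_some hm0, palmColor_none] at hval; omega
    · rw [palmColor_some hm0, palmColor_some hm0] at hval
      simp only at hval
      have hb := block_inj hm0 (Nat.mod_lt _ hm0) (Nat.mod_lt _ hm0) (by omega : j.1 * m + i.1 / m ^ j.1 % m = j'.1 * m + i'.1 / m ^ j'.1 % m)
      simp only [hG, Palm, fromRel_adj] at hadj
      rcases hadj with ⟨-, ⟨-, h2⟩ | ⟨-, h2⟩⟩ <;> omega
  · -- locating
    intro u v huv
    by_cases hdep : pdepth u = pdepth v
    · -- same depth, different legs
      rcases u with - | ⟨i, j⟩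
      · rcases v with - | ⟨i', j'⟩
        · exact absurd rfl huv
        · exact absurd hdep (by simp [pdepth])
      rcases v with - | ⟨i', j'⟩
      · exact absurd hdep (by simp [pdepth])
      have hjj : j = j' := Fin.ext (by simpa [pdepth] using hdep)
      subst hjj
      have hii : i ≠ i' := by
        intro h; subst h; exact huv rfl
      have hiv : i.1 ≠ i'.1 := fun h => hii (Fin.ext h)
      -- find a digit where they differ
      have hdig : ∃ d, d < k ∧ i.1 / m ^ d % m ≠ i'.1 / m ^ d % m := by
        by_contra hcon
        push_neg at hcon
        exact hiv (digits_inj m k i.1 i'.1 (lt_of_lt_of_le i.2 hn)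
          (lt_of_lt_of_le i'.2 hn) hcon)
      obtain ⟨d, hdk, hdne⟩ := hdig
      set D := i.1 / m ^ d % m with hD
      have hDlt : D < m := Nat.mod_lt _ hm0
      have h2 : d + 1 ≤ k := hdk
      have h3 : d * m + m ≤ k * m := by
        rw [← Nat.succ_mul]; exact Nat.mul_le_mul_right m h2
      have tlt : 1 + d * m + D < k * m + 1 := by omega
      set t : Fin (k * m + 1) := ⟨1 + d * m + D, tlt⟩ with ht
      refine ⟨t, ?_⟩
      -- characterize the class of t
      have hmem : ∀ w : PalmVert n (fun _ => k), w ∈ c ⁻¹' {t} ↔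
          ∃ i₂ : Fin n, w = some ⟨i₂, ⟨d, hdk⟩⟩ ∧ i₂.1 / m ^ d % m = D := by
        intro w
        rcases w with - | ⟨i₂, j₂⟩
        · simp only [Set.mem_preimage, Set.mem_singleton_iff]
          constructor
          · intro hw
            have h0 : (0 : ℕ) = 1 + d * m + D := congrArg Fin.val hw
            omega
          · rintro ⟨_, h, -⟩; exact absurd h (by simp)
        · simp only [Set.mem_preimage, Set.mem_singleton_iff]
          constructor
          · intro hw
            have hval : 1 + j₂.1 * m + i₂.1 / m ^ j₂.1 % m = 1 + d * m + D := by
              rw [← palmColor_some hm0 ⟨i₂, j₂⟩]; exact congrArg Fin.val hw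
            have hb := block_inj hm0 (Nat.mod_lt _ hm0) hDlt
              (by omega : j₂.1 * m + i₂.1 / m ^ j₂.1 % m = d * m + D)
            refine ⟨i₂, ?_, ?_⟩
            · have : j₂ = (⟨d, hdk⟩ : Fin k) := Fin.ext hb.1
              rw [this]
            · rw [← hb.2, hb.1]
          · rintro ⟨i₃, hw, hdig3⟩
            injection hw with hw
            have h1 : i₂ = i₃ := congrArg Sigma.fst hw
            have h2 : j₂ = ⟨d, hdk⟩ := by
              subst h1
              exact congrArg Sigma.snd hw
            subst h1
            apply Fin.ext
            rw [palmColor_some hm0]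
            show 1 + j₂.1 * m + i₂.1 / m ^ j₂.1 % m = 1 + d * m + D
            rw [h2, ← hdig3]
      -- the two distances
      have hdu : distToSet G (some ⟨i, j⟩) (c ⁻¹' {t}) = Nat.dist j.1 d := by
        apply le_antisymm
        · apply Nat.sInf_le
          refine ⟨some ⟨i, ⟨d, hdk⟩⟩, (hmem _).mpr ⟨i, rfl, rfl⟩, ?_⟩
          rw [hG, palm_dist_same]
        · apply le_csInf
          · exact ⟨_, ⟨some ⟨i, ⟨d, hdk⟩⟩, (hmem _).mpr ⟨i, rfl, rfl⟩, rfl⟩⟩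
          · rintro b ⟨w, hw, rfl⟩
            obtain ⟨i₂, rfl, -⟩ := (hmem w).mp hw
            by_cases hii2 : i = i₂
            · subst hii2; rw [hG, palm_dist_same]
            · rw [hG, palm_dist_cross i i₂ hii2]
              simp only [Nat.dist]
              omega
      have hdv : distToSet G (some ⟨i', j⟩) (c ⁻¹' {t}) = (j.1 + 1) + (d + 1) := by
        apply le_antisymm
        · apply Nat.sInf_le
          refine ⟨some ⟨i, ⟨d, hdk⟩⟩, (hmem _).mpr ⟨i, rfl, rfl⟩, ?_⟩
          rw [hG, palm_dist_cross i' i (fun h => hii h.symm)]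
        · apply le_csInf
          · exact ⟨_, ⟨some ⟨i, ⟨d, hdk⟩⟩, (hmem _).mpr ⟨i, rfl, rfl⟩, rfl⟩⟩
          · rintro b ⟨w, hw, rfl⟩
            obtain ⟨i₂, rfl, hdig2⟩ := (hmem w).mp hw
            have hii2 : i' ≠ i₂ := by
              intro h; subst h; exact hdne hdig2.symm
            rw [hG, palm_dist_cross i' i₂ hii2]
      rw [hdu, hdv]
      simp only [Nat.dist]
      omega
    · -- different depths: hub class
      exact ⟨⟨0, t0lt⟩, by rw [hdist0, hdist0]; exact hdep⟩

lemma iso_dist_le {V : Type*} {G : SimpleGraph V} (φ : G ≃g G) (u v : V) :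
    G.dist (φ u) (φ v) ≤ G.dist u v := by
  by_cases hr : G.Reachable u v
  · obtain ⟨p, hp⟩ := hr.exists_walk_length_eq_dist
    exact (SimpleGraph.dist_le (p.map φ.toHom)).trans_eq (by rw [Walk.length_map, hp])
  · have : ¬ G.Reachable (φ u) (φ v) := by
      intro h
      have := h.map φ.symm.toHom
      exact hr (by simpa using this)
    rw [SimpleGraph.dist_eq_zero_of_not_reachable this]
    exact Nat.zero_le _

lemma iso_dist {V : Type*} {G : SimpleGraph V} (φ : G ≃g G) (u v : V) :
    G.dist (φ u) (φ v) = G.dist u v := by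
  refine le_antisymm (iso_dist_le φ u v) ?_
  have := iso_dist_le φ.symm (φ u) (φ v)
  simpa using this

lemma palm_locating_card {n k M : ℕ} (hk : 1 ≤ k) (c : PalmVert n (fun _ => k) → Fin M)
    (hc : IsLocatingColoring (Palm n (fun _ => k)) c) : n ≤ M ^ k := by
  by_contra hcon
  push_neg at hcon
  -- pigeonhole: two legs with identical color sequences
  have hcard : Fintype.card (Fin k → Fin M) < Fintype.card (Fin n) := by
    simp [Fintype.card_fun]
    exact hcon
  obtain ⟨i, i', hii, hσ⟩ := Fintype.exists_ne_map_eq_of_card_lt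
    (fun (i : Fin n) (j : Fin k) => c (some ⟨i, j⟩)) hcard
  -- the swap automorphism
  set G := Palm n (fun _ => k) with hG
  let e : PalmVert n (fun _ => k) ≃ PalmVert n (fun _ => k) :=
    { toFun := fun w => w.map (fun x => ⟨Equiv.swap i i' x.1, x.2⟩)
      invFun := fun w => w.map (fun x => ⟨Equiv.swap i i' x.1, x.2⟩)
      left_inv := by
        intro w
        rcases w with - | ⟨a, b⟩
        · rfl
        · simp [Option.map, Equiv.swap_apply_self]; rfl
      right_inv := by
        intro w
        rcases w with - | ⟨a, b⟩
        · rfl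
        · simp [Option.map, Equiv.swap_apply_self]; rfl }
  have hswapval : ∀ a b : Fin n, (Equiv.swap i i' a = Equiv.swap i i' b) ↔ a = b :=
    fun a b => (Equiv.swap i i').apply_eq_iff_eq
  have φadj : ∀ u v : PalmVert n (fun _ => k), G.Adj (e u) (e v) ↔ G.Adj u v := by
    intro u v
    rcases u with - | ⟨a, b⟩ <;> rcases v with - | ⟨a', b'⟩
    · exact Iff.rfl
    · exact ⟨fun h => (fromRel_adj _ _ _).mpr ⟨(by intro h'; cases h'), ((fromRel_adj _ _ _).mp h).2⟩,
        fun h => (fromRel_adj _ _ _).mpr ⟨(by intro h'; cases h'), ((fromRel_adj _ _ _).mp h).2⟩⟩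
    · exact ⟨fun h => (fromRel_adj _ _ _).mpr ⟨(by intro h'; cases h'), ((fromRel_adj _ _ _).mp h).2⟩,
        fun h => (fromRel_adj _ _ _).mpr ⟨(by intro h'; cases h'), ((fromRel_adj _ _ _).mp h).2⟩⟩
    have hsome : ∀ (a a' : Fin n) (b b' : Fin k),
        ((some ⟨Equiv.swap i i' a, b⟩ : PalmVert n (fun _ => k)) =
          some ⟨Equiv.swap i i' a', b'⟩) ↔
        ((some ⟨a, b⟩ : PalmVert n (fun _ => k)) = some ⟨a', b'⟩) := by
      intro a a' b b'
      constructor <;> intro h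
      · injection h with h
        have ha : a = a' := (Equiv.swap i i').injective (congrArg Sigma.fst h)
        subst ha
        have hb : b = b' := congrArg Sigma.snd h
        rw [hb]
      · injection h with h
        have ha : a = a' := congrArg Sigma.fst h
        subst ha
        have hb : b = b' := congrArg Sigma.snd h
        rw [hb]
    have hv : ∀ x y : Fin n, ((Equiv.swap i i' x : ℕ) = (Equiv.swap i i' y : ℕ)) ↔
        ((x : ℕ) = (y : ℕ)) := fun x y =>
      (Fin.val_eq_val _ _).trans ((hswapval x y).trans (Fin.val_eq_val _ _).symm)
    constructor
    · intro h
      obtain ⟨hne, hr⟩ := (fromRel_adj _ _ _).mp h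
      refine (fromRel_adj _ _ _).mpr ⟨fun h' => hne ((hsome a a' b b').mpr h'), ?_⟩
      rcases hr with ⟨h1, h2⟩ | ⟨h1, h2⟩
      · exact Or.inl ⟨(hv a a').mp h1, h2⟩
      · exact Or.inr ⟨(hv a' a).mp h1, h2⟩
    · intro h
      obtain ⟨hne, hr⟩ := (fromRel_adj _ _ _).mp h
      refine (fromRel_adj _ _ _).mpr ⟨fun h' => hne ((hsome a a' b b').mp h'), ?_⟩
      rcases hr with ⟨h1, h2⟩ | ⟨h1, h2⟩
      · exact Or.inl ⟨(hv a a').mpr h1, h2⟩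
      · exact Or.inr ⟨(hv a' a).mpr h1, h2⟩
  let φ : G ≃g G := { toEquiv := e, map_rel_iff' := φadj _ _ }
  have hce : ∀ w, c (e w) = c w := by
    intro w
    rcases w with - | ⟨a, b⟩
    · rfl
    · show c (some ⟨Equiv.swap i i' a, b⟩) = c (some ⟨a, b⟩)
      rcases eq_or_ne a i with rfl | hai
      · rw [Equiv.swap_apply_left]
        exact (congrFun hσ b).symm
      rcases eq_or_ne a i' with rfl | hai'
      · rw [Equiv.swap_apply_right]
        exact congrFun hσ b
      · rw [Equiv.swap_apply_of_ne_of_ne hai hai']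
  have hclassinv : ∀ t : Fin M, e '' (c ⁻¹' {t}) = c ⁻¹' {t} := by
    intro t
    ext w
    constructor
    · rintro ⟨w', hw', rfl⟩
      simp only [Set.mem_preimage, Set.mem_singleton_iff] at hw' ⊢
      rw [hce, hw']
    · intro hw
      refine ⟨e.symm w, ?_, e.apply_symm_apply w⟩
      simp only [Set.mem_preimage, Set.mem_singleton_iff] at hw ⊢
      rw [← hce (e.symm w), e.apply_symm_apply, hw]
  have hdistinv : ∀ (t : Fin M) (u : PalmVert n (fun _ => k)),
      distToSet G (e u) (c ⁻¹' {t}) = distToSet G u (c ⁻¹' {t}) := by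
    intro t u
    unfold distToSet
    conv_lhs => rw [← hclassinv t, Set.image_image]
    exact congrArg sInf (Set.image_congr fun w _ => iso_dist φ u w)
  have hne : (some ⟨i, ⟨0, hk⟩⟩ : PalmVert n (fun _ => k)) ≠
      e (some ⟨i, ⟨0, hk⟩⟩) := by
    show _ ≠ (some ⟨Equiv.swap i i' i, ⟨0, hk⟩⟩ : PalmVert n (fun _ => k))
    rw [Equiv.swap_apply_left]
    intro h
    injection h with h
    exact hii (congrArg Sigma.fst h)
  obtain ⟨t, hT⟩ := hc.2 _ _ hne
  exact hT (hdistinv t (some ⟨i, ⟨0, hk⟩⟩)).symm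

/-- For every fixed positive integer `k`, `χ_L(S_n(k)) = Θ(n^{1/k})`:
there are constants `A, B > 0` and `N` such that
`A · n^{1/k} ≤ χ_L(S_n(k)) ≤ B · n^{1/k}` for all `n ≥ N`. -/
theorem locatingChromaticNumber_regularPalm_isTheta (k : ℕ) (hk : 1 ≤ k) :
    ∃ (A B : ℝ), 0 < A ∧ 0 < B ∧ ∃ N : ℕ, ∀ n : ℕ, N ≤ n →
      A * (n : ℝ) ^ ((1 : ℝ) / k) ≤ (locatingChromaticNumber (Palm n (fun _ => k)) : ℝ) ∧
      (locatingChromaticNumber (Palm n (fun _ => k)) : ℝ) ≤ B * (n : ℝ) ^ ((1 : ℝ) / k) := by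
  refine ⟨1, 2 * k + 1, one_pos, by positivity, 1, ?_⟩
  intro n hn
  have hk0 : (k : ℝ) ≠ 0 := Nat.cast_ne_zero.mpr (by omega)
  have hn1 : (1 : ℝ) ≤ (n : ℝ) := by exact_mod_cast hn
  set x : ℝ := (n : ℝ) ^ ((1 : ℝ) / k) with hxdef
  have hx1 : 1 ≤ x := by
    have h := Real.rpow_le_rpow (by norm_num) hn1 (by positivity : (0:ℝ) ≤ 1 / k)
    rwa [Real.one_rpow] at h
  have hx0 : 0 < x := lt_of_lt_of_le one_pos hx1
  have hxk : x ^ k = (n : ℝ) := by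
    rw [← Real.rpow_natCast x k, hxdef, ← Real.rpow_mul (Nat.cast_nonneg n),
      one_div, inv_mul_cancel₀ hk0, Real.rpow_one]
  set m := ⌈x⌉₊ with hmdef
  have hm1 : 1 ≤ m := Nat.ceil_pos.mpr hx0
  have hxm : x ≤ (m : ℝ) := Nat.le_ceil x
  have hnm : n ≤ m ^ k := by
    have h : (n : ℝ) ≤ (m : ℝ) ^ k := by
      rw [← hxk]; exact pow_le_pow_left₀ (le_of_lt hx0) hxm k
    exact_mod_cast h
  obtain ⟨c, hcl⟩ := palm_exists_locating hk hm1 hnm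
  have hSne : (k * m + 1) ∈
      {K : ℕ | ∃ c : PalmVert n (fun _ => k) → Fin K,
        IsLocatingColoring (Palm n (fun _ => k)) c} := ⟨c, hcl⟩
  set L := locatingChromaticNumber (Palm n (fun _ => k)) with hLdef
  have hLmem : L ∈
      {K : ℕ | ∃ c : PalmVert n (fun _ => k) → Fin K,
        IsLocatingColoring (Palm n (fun _ => k)) c} := Nat.sInf_mem ⟨_, hSne⟩
  obtain ⟨c₀, hc₀⟩ := hLmem
  have hL : n ≤ L ^ k := palm_locating_card hk c₀ hc₀
  have hLle : L ≤ k * m + 1 := Nat.sInf_le hSne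
  constructor
  · rw [one_mul]
    have h1 : (n : ℝ) ≤ (L : ℝ) ^ k := by exact_mod_cast hL
    calc x = (n : ℝ) ^ ((1 : ℝ) / k) := rfl
      _ ≤ ((L : ℝ) ^ k) ^ ((1 : ℝ) / k) :=
          Real.rpow_le_rpow (Nat.cast_nonneg n) h1 (by positivity)
      _ = (L : ℝ) := by
          rw [← Real.rpow_natCast (L : ℝ) k, ← Real.rpow_mul (Nat.cast_nonneg L),
            mul_one_div, div_self hk0, Real.rpow_one]
  · have h2 : (L : ℝ) ≤ (k : ℝ) * m + 1 := by exact_mod_cast hLle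
    have hm2 : (m : ℝ) ≤ 2 * x := by
      have hceil := Nat.ceil_lt_add_one (le_of_lt hx0)
      linarith
    have hk1 : (1 : ℝ) ≤ (k : ℝ) := by exact_mod_cast hk
    have h3 : (k : ℝ) * m ≤ k * (2 * x) :=
      mul_le_mul_of_nonneg_left hm2 (by positivity)
    calc (L : ℝ) ≤ (k : ℝ) * m + 1 := h2
      _ ≤ (k : ℝ) * (2 * x) + x := by linarith
      _ = (2 * ↑k + 1) * x := by ring

end
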